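/- Let f : ℂ → ℂ be an SD map. Then the following are equivalent: (1) f preserves ℝ, i.e., f(x) is real for every real x; (2) the restriction of f to ℝ is continuous; (3) f fixes ℝ pointwise, i.e., f(x) = x for every real x. -/

import Mathlib

/-- A function `f : F → F` on a field `F` is an *SD map* if for all `x ≠ y` one has
`f x ≠ f y` and `f ((x+y)/(x-y)) = (f x + f y) / (f x - f y)`. -/
def IsSDMap {F : Type*} [Field F] (f : F → F) : Prop :=
  ∀ ⦃x y : F⦄, x ≠ y →
    f x ≠ f y ∧ f ((x + y) / (x - y)) = (f x + f y) / (f x - f y)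

variable {f : ℂ → ℂ}

lemma sd_inj (hf : IsSDMap f) : Function.Injective f := by
  intro x y h
  by_contra hne
  exact (hf hne).1 h

lemma sd_one (hf : IsSDMap f) : f 1 = 1 := by
  have h1 := (hf (one_ne_zero : (1:ℂ) ≠ 0)).2
  have h2 := (hf (two_ne_zero : (2:ℂ) ≠ 0)).2
  have d1 : f 1 - f 0 ≠ 0 := sub_ne_zero.2 (hf (one_ne_zero : (1:ℂ) ≠ 0)).1
  have d2 : f 2 - f 0 ≠ 0 := sub_ne_zero.2 (hf (two_ne_zero : (2:ℂ) ≠ 0)).1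
  have e1 : ((1:ℂ) + 0) / (1 - 0) = 1 := by norm_num
  have e2 : ((2:ℂ) + 0) / (2 - 0) = 1 := by norm_num
  rw [e1, eq_div_iff d1] at h1
  rw [e2, eq_div_iff d2] at h2
  have h12 : f 1 - f 2 ≠ 0 := sub_ne_zero.2 ((sd_inj hf).ne (by norm_num : (1:ℂ) ≠ 2))
  have key : f 1 * (f 1 - f 2) = 1 * (f 1 - f 2) := by linear_combination h1 - h2
  exact mul_right_cancel₀ h12 key

lemma sd_zero (hf : IsSDMap f) : f 0 = 0 := by
  have h1 := (hf (one_ne_zero : (1:ℂ) ≠ 0)).2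
  have d1 : f 1 - f 0 ≠ 0 := sub_ne_zero.2 (hf (one_ne_zero : (1:ℂ) ≠ 0)).1
  have e1 : ((1:ℂ) + 0) / (1 - 0) = 1 := by norm_num
  rw [e1, eq_div_iff d1, sd_one hf] at h1
  linear_combination -h1 / 2

lemma sd_neg (hf : IsSDMap f) (x : ℂ) : f (-x) = -f x := by
  rcases eq_or_ne x 0 with rfl | hx
  · simp [sd_zero hf]
  · have hne : x ≠ -x := by
      intro h
      apply hx
      have : (2:ℂ) * x = 0 := by linear_combination h
      simpa using this
    have h := (hf hne).2
    have d : f x - f (-x) ≠ 0 := sub_ne_zero.2 (hf hne).1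
    have e : (x + -x) / (x - -x) = 0 := by
      rw [div_eq_zero_iff]; left; ring
    rw [e, sd_zero hf] at h
    have := (div_eq_zero_iff.mp h.symm).resolve_right d
    linear_combination this

lemma sd_neg_one (hf : IsSDMap f) : f (-1) = -1 := by
  rw [sd_neg hf, sd_one hf]

lemma sd_inv (hf : IsSDMap f) (x : ℂ) : f x⁻¹ = (f x)⁻¹ := by
  rcases eq_or_ne x 0 with rfl | hx0
  · simp [sd_zero hf]
  rcases eq_or_ne x 1 with rfl | hx1
  · simp [sd_one hf]
  set u : ℂ := (x + 1) / (x - 1) with hu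
  have hxm1 : x - 1 ≠ 0 := sub_ne_zero.2 hx1
  have hu1 : u ≠ 1 := by
    rw [hu, Ne, div_eq_one_iff_eq hxm1]
    intro h
    have h2 : (2:ℂ) = 0 := by linear_combination h
    norm_num at h2
  have hum1 : u ≠ -1 := by
    rw [hu, Ne, div_eq_iff hxm1]
    intro h
    exact hx0 (by linear_combination h / 2)
  have ha : u + 1 = 2 * x / (x - 1) := by
    rw [hu]; field_simp; ring
  have hb : u - 1 = 2 / (x - 1) := by
    rw [hu]; field_simp; ring
  have hc : u - -1 = 2 * x / (x - 1) := by
    rw [hu]; field_simp; ring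
  have hd : u + -1 = 2 / (x - 1) := by
    rw [hu]; field_simp; ring
  have e1 : (u + 1) / (u - 1) = x := by
    rw [ha, hb]; field_simp
  have e2 : (u + -1) / (u - -1) = x⁻¹ := by
    rw [hc, hd]
    rw [div_div_div_comm]
    field_simp
  have h1 := (hf hu1).2
  rw [e1, sd_one hf] at h1
  have h2 := (hf hum1).2
  rw [e2, sd_neg_one hf] at h2
  have fu1 : f u - 1 ≠ 0 := by
    rw [sub_ne_zero, ← sd_one hf]
    exact (sd_inj hf).ne hu1
  have fup1 : f u + 1 ≠ 0 := by
    have : f u ≠ -1 := by rw [← sd_neg_one hf]; exact (sd_inj hf).ne hum1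
    intro h; exact this (by linear_combination h)
  rw [h1, h2, inv_div]
  ring

lemma sd_sq (hf : IsSDMap f) (x : ℂ) : f (x ^ 2) = (f x) ^ 2 := by
  rcases eq_or_ne x 0 with rfl | hx0
  · simp [sd_zero hf]
  rcases eq_or_ne x 1 with rfl | hx1
  · simp [sd_one hf]
  rcases eq_or_ne x (-1) with rfl | hxm1
  · norm_num [sd_one hf, sd_neg_one hf]
  have hsq1 : x ^ 2 ≠ 1 := by
    intro h
    have : (x - 1) * (x + 1) = 0 := by linear_combination h
    rcases mul_eq_zero.mp this with h' | h'
    · exact hx1 (by linear_combination h')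
    · exact hxm1 (by linear_combination h')
  have hxi : x ≠ x⁻¹ := by
    intro h
    apply hsq1
    field_simp at h
    linear_combination h
  have h1 := (hf hxi).2
  rw [sd_inv hf] at h1
  have h2 := (hf (hsq1 : x^2 ≠ 1)).2
  rw [sd_one hf] at h2
  have hfx0 : f x ≠ 0 := by rw [← sd_zero hf]; exact (sd_inj hf).ne hx0
  have hfx1 : f x ≠ 1 := by rw [← sd_one hf]; exact (sd_inj hf).ne hx1
  have hfxm1 : f x ≠ -1 := by rw [← sd_neg_one hf]; exact (sd_inj hf).ne hxm1
  have hfsq1 : f (x^2) - 1 ≠ 0 := by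
    rw [sub_ne_zero, ← sd_one hf]; exact (sd_inj hf).ne hsq1
  have hd2 : (f x)^2 - 1 ≠ 0 := by
    intro h
    have : (f x - 1) * (f x + 1) = 0 := by linear_combination h
    rcases mul_eq_zero.mp this with h' | h'
    · exact hfx1 (by linear_combination h')
    · exact hfxm1 (by linear_combination h')
  have hden : x - x⁻¹ ≠ 0 := sub_ne_zero.2 hxi
  have hdenf : f x - (f x)⁻¹ ≠ 0 := by
    have := (hf hxi).1
    rw [sd_inv hf] at this
    exact sub_ne_zero.2 this
  have e1 : (x + x⁻¹) / (x - x⁻¹) = (x^2 + 1) / (x^2 - 1) := by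
    rw [div_eq_div_iff hden (sub_ne_zero.2 hsq1)]
    field_simp
  have e2 : (f x + (f x)⁻¹) / (f x - (f x)⁻¹) = ((f x)^2 + 1) / ((f x)^2 - 1) := by
    rw [div_eq_div_iff hdenf hd2]
    field_simp
  rw [e1, e2] at h1
  rw [h1] at h2
  rw [div_eq_div_iff hd2 hfsq1] at h2
  linear_combination h2 / 2

lemma sd_two (hf : IsSDMap f) : f 2 = 2 := by
  have inj := sd_inj hf
  have h31 : (3:ℂ) ≠ 1 := by norm_num
  have h53 : (5:ℂ) ≠ 3 := by norm_num
  have h54 : (5:ℂ) ≠ 4 := by norm_num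
  have E1 := (hf h31).2
  have E3 := (hf h53).2
  have E5 := (hf h54).2
  have c1 : ((3:ℂ) + 1) / (3 - 1) = 2 := by norm_num
  have c3 : ((5:ℂ) + 3) / (5 - 3) = 4 := by norm_num
  have c5 : ((5:ℂ) + 4) / (5 - 4) = 9 := by norm_num
  rw [c1, sd_one hf] at E1
  rw [c3] at E3
  rw [c5] at E5
  have E2 : f 4 = (f 2)^2 := by
    have : ((2:ℂ))^2 = 4 := by norm_num
    rw [← this, sd_sq hf]
  have E4 : f 9 = (f 3)^2 := by
    have : ((3:ℂ))^2 = 9 := by norm_num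
    rw [← this, sd_sq hf]
  have d1 : f 3 - 1 ≠ 0 := by
    rw [sub_ne_zero, ← sd_one hf]; exact inj.ne h31
  have d3 : f 5 - f 3 ≠ 0 := sub_ne_zero.2 (inj.ne h53)
  have d5 : f 5 - f 4 ≠ 0 := sub_ne_zero.2 (inj.ne h54)
  rw [eq_div_iff d1] at E1
  rw [eq_div_iff d3] at E3
  rw [eq_div_iff d5] at E5
  rw [E2] at E3 E5
  rw [E4] at E5
  -- P1 : f 2 * (f 3 - 1) = f 3 + 1  := E1
  -- P3 : (f 2)^2 * (f 5 - f 3) = f 5 + f 3 := E3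
  -- P5 : (f 3)^2 * (f 5 - (f 2)^2) = f 5 + (f 2)^2 := E5
  have ha0 : f 2 ≠ 0 := by rw [← sd_zero hf]; exact inj.ne (by norm_num)
  have hap1 : f 2 + 1 ≠ 0 := by
    have : f 2 ≠ -1 := by rw [← sd_neg_one hf]; exact inj.ne (by norm_num)
    intro h; exact this (by linear_combination h)
  have hsq : (f 2)^2 + 1 ≠ 0 := by
    have : f 4 ≠ -1 := by rw [← sd_neg_one hf]; exact inj.ne (by norm_num)
    rw [E2] at this
    intro h; exact this (by linear_combination h)
  have h5 : f 5 * (f 2 - 1)^2 = (f 2)^2 + 1 := by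
    apply mul_right_cancel₀ hap1
    linear_combination (f 2 - 1) * E3 + ((f 2)^2 + 1) * E1
  have hz : (-2) * f 2 * (f 2 - 2) * ((f 2)^2 + 1)^2 = 0 := by
    linear_combination (f 2 - 1)^4 * E5
      - (f 5 - (f 2)^2) * (f 2 - 1)^2 * (f 3 * (f 2 - 1) + f 2 + 1) * E1
      - (4 * f 2) * h5
  have := mul_eq_zero.mp hz
  rcases this with h | h
  · rcases mul_eq_zero.mp h with h' | h'
    · rcases mul_eq_zero.mp h' with h'' | h''
      · norm_num at h''
      · exact absurd h'' ha0
    · linear_combination h'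
  · exact absurd (pow_eq_zero_iff (two_ne_zero (α := ℕ)) |>.mp h) hsq

lemma sd_step (hf : IsSDMap f) {x : ℂ} (hx0 : x ≠ 0) (h1 : f x = x)
    (h2 : f (x + 1) = x + 1) : f (x + 2) = x + 2 := by
  have hne : x + 2 ≠ x := by
    intro h; have : (2:ℂ) = 0 := by linear_combination h
    norm_num at this
  have h := (hf hne).2
  have d : f (x + 2) - f x ≠ 0 := sub_ne_zero.2 (hf hne).1
  have c : (x + 2 + x) / (x + 2 - x) = x + 1 := by
    have : x + 2 - x = 2 := by ring
    rw [this]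
    field_simp
    ring
  rw [c, h1, h2] at h
  rw [h1] at d
  rw [eq_div_iff d] at h
  -- (x+1) * (f (x+2) - x) = f (x+2) + x
  have : (f (x + 2) - (x + 2)) * x = 0 := by linear_combination h
  rcases mul_eq_zero.mp this with h' | h'
  · linear_combination h'
  · exact absurd h' hx0

lemma sd_nat (hf : IsSDMap f) (n : ℕ) : f n = n := by
  induction n using Nat.strong_induction_on with
  | _ n ih =>
    match n, ih with
    | 0, _ => simpa using sd_zero hf
    | 1, _ => simpa using sd_one hf
    | 2, _ => simpa using sd_two hf
    | (m + 3), ih =>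
      have hm1 : f (m + 1 : ℕ) = ((m + 1 : ℕ) : ℂ) := ih (m+1) (by omega)
      have hm2 : f (m + 2 : ℕ) = ((m + 2 : ℕ) : ℂ) := ih (m+2) (by omega)
      have hx0 : ((m:ℂ) + 1) ≠ 0 := by
        have := Nat.cast_add_one_ne_zero (R := ℂ) m
        simpa using this
      have h1 : f ((m:ℂ) + 1) = (m:ℂ) + 1 := by push_cast at hm1 ⊢; exact hm1
      have h2 : f ((m:ℂ) + 1 + 1) = (m:ℂ) + 1 + 1 := by
        push_cast at hm2 ⊢
        rw [show (m:ℂ) + 1 + 1 = (m:ℂ) + 2 from by ring]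
        exact hm2
      have h3 := sd_step hf hx0 h1 h2
      push_cast
      rw [show (m:ℂ) + 1 + 2 = (m:ℂ) + 3 from by ring] at h3
      exact h3

lemma sd_int (hf : IsSDMap f) (n : ℤ) : f n = n := by
  rcases n with m | m
  · simpa using sd_nat hf m
  · have := sd_nat hf (m + 1)
    have h := sd_neg hf ((m + 1 : ℕ) : ℂ)
    rw [this] at h
    push_cast at h ⊢
    exact h

lemma sd_rat (hf : IsSDMap f) (q : ℚ) : f q = q := by
  set u : ℤ := q.num + q.den with hu
  set v : ℤ := q.num - q.den with hv
  have hden : (q.den : ℤ) ≠ 0 := by exact_mod_cast q.den_nz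
  have huv : u ≠ v := by
    intro h
    apply hden
    omega
  have hne : (u : ℂ) ≠ (v : ℂ) := fun h => huv (by exact_mod_cast h)
  have h := (hf hne).2
  have d : f u - f v ≠ 0 := sub_ne_zero.2 (hf hne).1
  rw [sd_int hf, sd_int hf] at h
  have c : ((u:ℂ) + v) / ((u:ℂ) - v) = (q : ℂ) := by
    rw [hu, hv]
    push_cast
    rw [Rat.cast_def]
    rw [div_eq_div_iff]
    · ring
    · intro hh
      apply hden
      have : (q.den : ℂ) = 0 := by linear_combination hh / 2
      exact_mod_cast this
    · intro hh
      apply hden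
      exact_mod_cast hh
  rw [c] at h
  exact h

theorem sd_map_complex_real_tfae (f : ℂ → ℂ) (hf : IsSDMap f) :
    List.TFAE [
      ∀ x : ℝ, ∃ r : ℝ, f (x : ℂ) = (r : ℂ),
      Continuous fun x : ℝ => f (x : ℂ),
      ∀ x : ℝ, f (x : ℂ) = (x : ℂ)] := by
  tfae_have 3 → 1 := fun h x => ⟨x, h x⟩
  tfae_have 3 → 2 := by
    intro h3
    have : (fun x : ℝ => f (x : ℂ)) = fun x : ℝ => (x : ℂ) := funext h3
    rw [this]
    exact Complex.continuous_ofReal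
  tfae_have 2 → 3 := by
    intro h2 x
    have hd : DenseRange ((↑) : ℚ → ℝ) := Rat.denseRange_cast
    have heq : (fun y : ℝ => f (y : ℂ)) = fun y : ℝ => (y : ℂ) := by
      apply hd.equalizer h2 Complex.continuous_ofReal
      funext q
      simp only [Function.comp]
      push_cast
      exact sd_rat hf q
    exact congrFun heq x
  tfae_have 1 → 3 := by
    intro h1 x
    set φ : ℝ → ℝ := fun y => (f y).re with hφdef
    have hφ : ∀ y : ℝ, f (y : ℂ) = ((φ y : ℝ) : ℂ) := by
      intro y
      obtain ⟨r, hr⟩ := h1 y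
      rw [hr]
      simp [hφdef, hr]
    have hinj : ∀ a b : ℝ, φ a = φ b → a = b := by
      intro a b hab
      have : f (a : ℂ) = f (b : ℂ) := by rw [hφ a, hφ b, hab]
      exact_mod_cast sd_inj hf this
    have hzero : φ 0 = 0 := by
      have h0 := hφ 0
      rw [Complex.ofReal_zero, sd_zero hf] at h0
      exact_mod_cast h0.symm
    have hneg : ∀ y : ℝ, φ (-y) = -φ y := by
      intro y
      have h := sd_neg hf (y : ℂ)
      rw [hφ y] at h
      have h2 := hφ (-y)
      rw [Complex.ofReal_neg] at h2
      rw [h] at h2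
      exact_mod_cast h2.symm
    have hpos : ∀ y : ℝ, 0 < y → 0 < φ y := by
      intro y hy
      set s : ℝ := Real.sqrt y with hs
      have hsq : s ^ 2 = y := Real.sq_sqrt hy.le
      have hsne : s ≠ 0 := by
        have := Real.sqrt_pos.mpr hy
        rw [← hs] at this
        exact this.ne'
      have key : f ((y : ℝ) : ℂ) = (f (s : ℂ)) ^ 2 := by
        rw [← hsq]
        push_cast
        exact sd_sq hf (s : ℂ)
      rw [hφ y, hφ s] at key
      have keyr : φ y = (φ s) ^ 2 := by exact_mod_cast key
      have hφs : φ s ≠ 0 := fun h => hsne (hinj s 0 (by rw [h, hzero]))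
      rw [keyr]
      positivity
    have hmonop : ∀ a b : ℝ, 0 < b → b < a → φ b < φ a := by
      intro a b hb hba
      have hab : (a : ℂ) ≠ (b : ℂ) := by
        exact_mod_cast (hba.ne' : a ≠ b)
      have h := (hf hab).2
      have c : ((a : ℂ) + b) / ((a : ℂ) - b) = (((a + b) / (a - b) : ℝ) : ℂ) := by
        push_cast
        ring
      rw [c, hφ ((a+b)/(a-b)), hφ a, hφ b] at h
      have hr : φ ((a+b)/(a-b)) = (φ a + φ b) / (φ a - φ b) := by
        exact_mod_cast h
      have ht : 0 < (a + b) / (a - b) := div_pos (by linarith) (by linarith)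
      have h1 : 0 < φ ((a+b)/(a-b)) := hpos _ ht
      rw [hr] at h1
      have hna : 0 < φ a := hpos a (hb.trans hba)
      have hnb : 0 < φ b := hpos b hb
      rcases div_pos_iff.mp h1 with ⟨_, hD⟩ | ⟨hN, _⟩
      · linarith
      · linarith
    have hmono : StrictMono φ := by
      intro x' y' hxy
      rcases lt_trichotomy x' 0 with hx | hx | hx
      · rcases lt_trichotomy y' 0 with hy | hy | hy
        · have : 0 < -y' := by linarith
          have := hmonop (-x') (-y') this (by linarith)
          rw [hneg, hneg] at this
          linarith
        · rw [hy, hzero]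
          have : 0 < φ (-x') := hpos _ (by linarith)
          rw [hneg] at this
          linarith
        · have h1 : φ x' < 0 := by
            have : 0 < φ (-x') := hpos _ (by linarith)
            rw [hneg] at this
            linarith
          have h2 : 0 < φ y' := hpos _ hy
          linarith
      · rw [hx, hzero]
        exact hpos _ (hx ▸ hxy)
      · exact hmonop y' x' hx hxy
    have hq : ∀ q : ℚ, φ (q : ℝ) = (q : ℝ) := by
      intro q
      have h := sd_rat hf q
      have h2 := hφ (q : ℝ)
      rw [Complex.ofReal_ratCast, h] at h2
      exact_mod_cast h2.symm
    have hfix : φ x = x := by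
      by_contra hne
      rcases lt_or_gt_of_ne hne with h | h
      · obtain ⟨q, hq1, hq2⟩ := exists_rat_btwn h
        have := hmono hq2
        rw [hq q] at this
        linarith
      · obtain ⟨q, hq1, hq2⟩ := exists_rat_btwn h
        have := hmono hq1
        rw [hq q] at this
        linarith
    rw [hφ x, hfix]
  tfae_finish
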